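/- A digraph D has a point-basis if and only if the shadow of every vertex of D contains an initial strong component; moreover, in that case every point-reaching set of D contains a point-basis. -/
import Mathlib


/-- Reachability by a directed walk (allowing the trivial walk). -/
def Reach {V : Type*} (A : V → V → Prop) : V → V → Prop := Relation.ReflTransGen A
/-- The strong component of a vertex: all vertices mutually reachable with it. -/
def SCC {V : Type*} (A : V → V → Prop) (v : V) : Set V :=
  {w | Reach A v w ∧ Reach A w v}

/-- A set is a strong component iff it is the strong component of some vertex. -/
def IsSCC {V : Type*} (A : V → V → Prop) (C : Set V) : Prop := ∃ v, C = SCC A v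

/-- A strong component is initial if no arc enters it from outside. -/
def InitialSCC {V : Type*} (A : V → V → Prop) (C : Set V) : Prop :=
  IsSCC A C ∧ ∀ x y, A x y → y ∈ C → x ∈ C
/-- A set S is point-reaching if every vertex is reachable from some vertex of S. -/
def PointReaching {V : Type*} (A : V → V → Prop) (S : Set V) : Prop :=
  ∀ v : V, ∃ s ∈ S, Reach A s v
/-- The shadow of u: all vertices from which u is reachable. -/
def Shadow {V : Type*} (A : V → V → Prop) (u : V) : Set V := {z | Reach A z u}
/-- A point-basis is a minimal point-reaching set. -/
def IsPointBasis {V : Type*} (A : V → V → Prop) (B : Set V) : Prop :=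
  PointReaching A B ∧ ∀ B' ⊂ B, ¬ PointReaching A B'

lemma reach_mem_initial {V : Type*} {A : V → V → Prop} {C : Set V} (hC : InitialSCC A C)
    {z w : V} (hz : z ∈ C) (h : Reach A w z) : w ∈ C := by
  induction h using Relation.ReflTransGen.head_induction_on with
  | refl => exact hz
  | head hab _ ih => exact hC.2 _ _ hab ih

lemma mem_scc_self {V : Type*} (A : V → V → Prop) (v : V) : v ∈ SCC A v :=
  ⟨Relation.ReflTransGen.refl, Relation.ReflTransGen.refl⟩

lemma scc_eq {V : Type*} {A : V → V → Prop} {v w : V} (h : w ∈ SCC A v) :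
    SCC A v = SCC A w := by
  obtain ⟨hvw, hwv⟩ := h
  ext x
  constructor
  · rintro ⟨h1, h2⟩
    exact ⟨Relation.ReflTransGen.trans hwv h1, Relation.ReflTransGen.trans h2 hvw⟩
  · rintro ⟨h1, h2⟩
    exact ⟨Relation.ReflTransGen.trans hvw h1, Relation.ReflTransGen.trans h2 hwv⟩

lemma basis_scc_initial {V : Type*} {A : V → V → Prop} {B : Set V}
    (hB : IsPointBasis A B) {b : V} (hb : b ∈ B) : InitialSCC A (SCC A b) := by
  refine ⟨⟨b, rfl⟩, ?_⟩
  intro x y hxy hy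
  by_contra hx
  have hxb : Reach A x b := Relation.ReflTransGen.head hxy hy.2
  apply hB.2 (B \ {b}) (Set.sdiff_singleton_ssubset.mpr hb)
  intro v
  obtain ⟨s, hsB, hsv⟩ := hB.1 v
  by_cases hsb : s = b
  · subst hsb
    obtain ⟨s', hs'B, hs'x⟩ := hB.1 x
    have hs'ne : s' ≠ s := by
      rintro rfl
      exact hx ⟨hs'x, hxb⟩
    exact ⟨s', ⟨hs'B, hs'ne⟩,
      Relation.ReflTransGen.trans hs'x (Relation.ReflTransGen.trans hxb hsv)⟩
  · exact ⟨s, ⟨hsB, hsb⟩, hsv⟩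

lemma main_basis {V : Type*} (A : V → V → Prop)
    (H : ∀ u : V, ∃ C : Set V, InitialSCC A C ∧ C ⊆ Shadow A u)
    (S : Set V) (hS : PointReaching A S) : ∃ B ⊆ S, IsPointBasis A B := by
  have hpick : ∀ C : Set V, InitialSCC A C → ∃ s, s ∈ S ∩ C := by
    intro C hC
    obtain ⟨v, rfl⟩ := hC.1
    obtain ⟨s, hsS, hs⟩ := hS v
    exact ⟨s, hsS, reach_mem_initial hC (mem_scc_self A v) hs⟩
  choose f hf using hpick
  refine ⟨{v | ∃ C, ∃ hC : InitialSCC A C, v = f C hC}, ?_, ?_, ?_⟩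
  · rintro v ⟨C, hC, rfl⟩
    exact (hf C hC).1
  · intro v
    obtain ⟨C, hC, hsub⟩ := H v
    exact ⟨f C hC, ⟨C, hC, rfl⟩, hsub (hf C hC).2⟩
  · rintro B' ⟨hsub, hne⟩ hB'
    rw [Set.not_subset] at hne
    obtain ⟨b, ⟨C, hC, rfl⟩, hbB'⟩ := hne
    obtain ⟨b', hb'B', hb'⟩ := hB' (f C hC)
    have hb'C : b' ∈ C := reach_mem_initial hC (hf C hC).2 hb'
    obtain ⟨C', hC', rfl⟩ := hsub hb'B'
    obtain ⟨v, hv⟩ := hC.1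
    obtain ⟨v', hv'⟩ := hC'.1
    have h1 : C = SCC A (f C' hC') := hv.trans (scc_eq (hv ▸ hb'C))
    have h2 : C' = SCC A (f C' hC') := hv'.trans (scc_eq (hv' ▸ (hf C' hC').2))
    have hCC' : C = C' := h1.trans h2.symm
    subst hCC'
    exact hbB' hb'B'

theorem pointBasis_exists_iff_shadows_contain_initial {V : Type*}
    (A : V → V → Prop) :
    ((∃ B : Set V, IsPointBasis A B) ↔
      ∀ u : V, ∃ C : Set V, InitialSCC A C ∧ C ⊆ Shadow A u) ∧
    ((∃ B : Set V, IsPointBasis A B) →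
      ∀ S : Set V, PointReaching A S → ∃ B ⊆ S, IsPointBasis A B) := by
  have fwd : (∃ B : Set V, IsPointBasis A B) →
      ∀ u : V, ∃ C : Set V, InitialSCC A C ∧ C ⊆ Shadow A u := by
    rintro ⟨B, hB⟩ u
    obtain ⟨b, hbB, hbu⟩ := hB.1 u
    exact ⟨SCC A b, basis_scc_initial hB hbB,
      fun w hw => Relation.ReflTransGen.trans hw.2 hbu⟩
  constructor
  · constructor
    · exact fwd
    · intro H
      obtain ⟨B, hBsub, hB⟩ := main_basis A H Set.univ
        (fun v => ⟨v, Set.mem_univ v, Relation.ReflTransGen.refl⟩)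
      exact ⟨B, hB⟩
  · intro hex S hS
    exact main_basis A (fwd hex) S hS
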